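/- arXiv:2303.01224 — 2 statements merged into one kernel-verified Lean document; each statement's English description precedes it below -/
import Mathlib

section
/- Let S = {x ∈ R^n : H x ≤ h, cᵀ x ≤ c₀} be a full-dimensional simplex, where H ∈ Z^{n×n} is nonsingular. Then there exists a vector t ∈ R^n with t_i > 0 for all i such that c = -Hᵀ t. -/
/-- For a bounded full-dimensional simplex `{x : H x ≤ h, cᵀ x ≤ c₀}` with `H`
nonsingular, the last normal vector `c` is a strictly negative combination of
the rows of `H`: `c = -Hᵀ t` with `t > 0` componentwise. -/
theorem simplex_last_row_neg_comb (n : ℕ) (H : Matrix (Fin n) (Fin n) ℤ)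
    (h : Fin n → ℤ) (c : Fin n → ℤ) (c₀ : ℤ)
    (hH : H.det ≠ 0)
    (S : Set (Fin n → ℝ))
    (hS : S = {x : Fin n → ℝ |
      (∀ i, (H.map (Int.cast : ℤ → ℝ)).mulVec x i ≤ (h i : ℝ)) ∧
      (∑ i, (c i : ℝ) * x i) ≤ (c₀ : ℝ)})
    (hbdd : Bornology.IsBounded S)
    (hfulldim : (interior S).Nonempty) :
    ∃ t : Fin n → ℝ, (∀ i, 0 < t i) ∧
      (fun i => (c i : ℝ)) = -(H.map (Int.cast : ℤ → ℝ)).transpose.mulVec t := by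
  set A : Matrix (Fin n) (Fin n) ℝ := H.map (Int.cast : ℤ → ℝ) with hA
  have hdetc : A.det = (H.det : ℝ) := by
    rw [hA]
    exact (RingHom.map_det (Int.castRingHom ℝ) H).symm
  have hdet : A.det ≠ 0 := by
    rw [hdetc]
    exact_mod_cast hH
  have hdetT : A.transpose.det ≠ 0 := by rwa [Matrix.det_transpose]
  have hunit : IsUnit A.det := isUnit_iff_ne_zero.mpr hdet
  have hunitT : IsUnit A.transpose.det := isUnit_iff_ne_zero.mpr hdetT
  set cr : Fin n → ℝ := fun i => (c i : ℝ) with hcr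
  refine ⟨-(A.transpose)⁻¹.mulVec cr, ?_, ?_⟩
  · -- positivity
    intro j
    by_contra hle
    push_neg at hle
    -- t j ≤ 0 where t = -(Aᵀ)⁻¹ c
    set t : Fin n → ℝ := -(A.transpose)⁻¹.mulVec cr with ht
    have hct : cr = -(A.transpose.mulVec t) := by
      rw [ht, Matrix.mulVec_neg, neg_neg, Matrix.mulVec_mulVec,
        Matrix.mul_nonsing_inv _ hunitT, Matrix.one_mulVec]
    set d : Fin n → ℝ := -(A⁻¹.mulVec (Pi.single j 1)) with hd
    have hAd : A.mulVec d = -(Pi.single j 1) := by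
      rw [hd, Matrix.mulVec_neg, Matrix.mulVec_mulVec,
        Matrix.mul_nonsing_inv _ hunit, Matrix.one_mulVec]
    have hdne : d ≠ 0 := by
      intro h0
      have : A.mulVec d = 0 := by rw [h0, Matrix.mulVec_zero]
      rw [hAd] at this
      have := congrFun this j
      simp at this
    have hcd : dotProduct cr d = t j := by
      rw [hct, neg_dotProduct, Matrix.mulVec_transpose,
        ← Matrix.dotProduct_mulVec, hAd]
      simp [dotProduct_neg, dotProduct_single]
    obtain ⟨x₀, hx₀⟩ := hfulldim
    have hx₀S : x₀ ∈ S := interior_subset hx₀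
    rw [hS] at hx₀S
    obtain ⟨hx₀1, hx₀2⟩ := hx₀S
    -- the ray x₀ + s • d lies in S
    have hray : ∀ s : ℝ, 0 ≤ s → x₀ + s • d ∈ S := by
      intro s hs
      rw [hS]
      constructor
      · intro i
        have : A.mulVec (x₀ + s • d) i = A.mulVec x₀ i + s * (A.mulVec d) i := by
          rw [Matrix.mulVec_add, Matrix.mulVec_smul]
          simp [Pi.smul_apply, smul_eq_mul]
        rw [this, hAd]
        have hnn : s * (-(Pi.single j 1) : Fin n → ℝ) i ≤ 0 := by
          rcases eq_or_ne i j with rfl | hne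
          · simp
            positivity
          · simp [Pi.single_eq_of_ne hne]
        calc A.mulVec x₀ i + s * (-(Pi.single j 1) : Fin n → ℝ) i
            ≤ A.mulVec x₀ i + 0 := by linarith
          _ ≤ (h i : ℝ) := by simpa using hx₀1 i
      · have : ∑ i, cr i * (x₀ + s • d) i = (∑ i, cr i * x₀ i) + s * (dotProduct cr d) := by
          simp only [Pi.add_apply, Pi.smul_apply, smul_eq_mul, mul_add,
            Finset.sum_add_distrib, dotProduct, Finset.mul_sum]
          congr 1
          exact Finset.sum_congr rfl fun i _ => by ring
        have h2 : s * (dotProduct cr d) ≤ 0 := by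
          rw [hcd]; exact mul_nonpos_of_nonneg_of_nonpos hs hle
        calc ∑ i, cr i * (x₀ + s • d) i
            = (∑ i, cr i * x₀ i) + s * (dotProduct cr d) := this
          _ ≤ (∑ i, cr i * x₀ i) + 0 := by linarith
          _ ≤ (c₀ : ℝ) := by simpa using hx₀2
    -- contradiction with boundedness
    obtain ⟨r, hr⟩ := hbdd.subset_closedBall 0
    have hdpos : 0 < ‖d‖ := norm_pos_iff.mpr hdne
    set s : ℝ := (r + ‖x₀‖ + 1) / ‖d‖ with hsdef
    have hs0 : 0 ≤ s := by
      have : (0:ℝ) ≤ r := by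
        have := hr (hray 0 le_rfl)
        simp at this
        calc (0:ℝ) ≤ ‖x₀ + (0:ℝ) • d‖ := norm_nonneg _
          _ ≤ r := by simpa using hr (hray 0 le_rfl)
      positivity
    have hmem := hr (hray s hs0)
    rw [Metric.mem_closedBall, dist_zero_right] at hmem
    have h1 : ‖s • d‖ - ‖x₀‖ ≤ ‖x₀ + s • d‖ := by
      have := norm_add_le (-x₀) (x₀ + s • d)
      simp at this
      calc ‖s • d‖ - ‖x₀‖ ≤ ‖x₀‖ + ‖x₀ + s • d‖ - ‖x₀‖ := by
            have := norm_add_le x₀ (s • d)  -- not quite; use norm_sub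
            have h' : ‖s • d‖ ≤ ‖x₀‖ + ‖x₀ + s • d‖ := by
              calc ‖s • d‖ = ‖(x₀ + s • d) - x₀‖ := by ring_nf
                _ ≤ ‖x₀ + s • d‖ + ‖x₀‖ := norm_sub_le _ _
                _ = ‖x₀‖ + ‖x₀ + s • d‖ := by ring
            linarith
        _ = ‖x₀ + s • d‖ := by ring
    have h2 : ‖s • d‖ = s * ‖d‖ := by
      rw [norm_smul, Real.norm_of_nonneg hs0]
    have h3 : s * ‖d‖ = r + ‖x₀‖ + 1 := by
      rw [hsdef, div_mul_cancel₀ _ (ne_of_gt hdpos)]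
    linarith
  · -- the identity c = -Aᵀ t
    rw [Matrix.mulVec_neg, neg_neg, Matrix.mulVec_mulVec,
      Matrix.mul_nonsing_inv _ hunitT, Matrix.one_mulVec]
end

section
/- Let H = [[I_s, 0],[B, T]] be a block lower-triangular integer n×n matrix where I_s is the s×s identity, T ∈ Z^{k×k} is lower-triangular with T_{ii} ≥ 2 and 0 ≤ T_{ij} < T_{ii} for j < i, and 0 ≤ B_{ij} < T_{ii} for all entries of B. If π is a permutation of the first s rows of H such that the corresponding permuted columns of B are equal to the original columns of B (i.e., π permutes indices with identical columns of B), then there exists a unimodular matrix Q ∈ Z^{n×n} with P_π H = H Q. -/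
/-- A permutation of the first `s` rows of `H = [[I, 0], [B, T]]` that permutes
indices corresponding to identical columns of `B` is redundant: it can be
undone by a unimodular column operation, i.e. `P_π H = H Q` for a unimodular
`Q`. -/
theorem redundant_row_permutation (s k : ℕ)
    (B : Matrix (Fin k) (Fin s) ℤ) (T : Matrix (Fin k) (Fin k) ℤ)
    (hlow : ∀ i j : Fin k, i < j → T i j = 0)
    (hdiag : ∀ i : Fin k, 2 ≤ T i i)
    (hred : ∀ i j : Fin k, j < i → 0 ≤ T i j ∧ T i j < T i i)
    (hB : ∀ i j, 0 ≤ B i j ∧ B i j < T i i)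
    (H : Matrix (Fin s ⊕ Fin k) (Fin s ⊕ Fin k) ℤ)
    (hH : H = Matrix.fromBlocks 1 0 B T)
    (π : Equiv.Perm (Fin s))
    (hπ : ∀ j : Fin s, (fun i => B i (π j)) = fun i => B i j) :
    ∃ Q : Matrix (Fin s ⊕ Fin k) (Fin s ⊕ Fin k) ℤ,
      (Q.det = 1 ∨ Q.det = -1) ∧
      H.submatrix (Equiv.sumCongr π (Equiv.refl (Fin k))) id = H * Q := by
  classical
  set P : Matrix (Fin s) (Fin s) ℤ := π.toPEquiv.toMatrix with hP
  refine ⟨Matrix.fromBlocks P 0 0 1, ?_, ?_⟩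
  · rw [Matrix.det_fromBlocks_zero₂₁, Matrix.det_one, mul_one, hP,
      Matrix.det_permutation]
    rcases Int.units_eq_one_or π.sign with h | h <;> simp [h]
  · have hBπ : ∀ (i : Fin k) (j : Fin s), B i (π⁻¹ j) = B i j := by
      intro i j
      have := congrFun (hπ (π⁻¹ j)) i
      simpa using this.symm
    subst hH
    rw [Matrix.fromBlocks_multiply]
    ext (i | i) (j | j) <;>
      simp [Matrix.fromBlocks, Matrix.submatrix, hP, PEquiv.toMatrix,
        Matrix.mul_apply, Matrix.one_apply, Equiv.toPEquiv, eq_comm]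
    rw [Finset.sum_eq_single (π⁻¹ j)]
    · simp [hBπ]
      exact (hBπ i j).symm
    · intro b _ hb
      rw [if_neg]
      intro h
      exact hb (by simp [h])
    · simp
end
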